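/- Let A1, …, An be deterministic top-down tree automata over a ranked alphabet Σ with pairwise disjoint state sets, let σ ∈ Σ have rank ≥ 1 and e ∈ Σ^(0). Let M1 be the deterministic top-down tree transducer with input alphabet Σ and output alphabet Σ ∪ {δ^(n)} whose states are a fresh initial state q0 together with all states of A1, …, An, whose rules include, for each Ai, the partial-identity rules p(τ(x1,…,xk)) → τ(p1(x1),…,pk(xk)) for every transition p(τ) → (p1,…,pk) of Ai (so that the initial state qi of Ai computes the partial identity on L(Ai)), plus the two rules q0(σ(x1,…,xm)) → δ(q1(x1), q2(x1), …, qn(x1)) and q0(e) → e. Let M2 be the single-state transducer with the sole rule p(e) → e, so τ_{M2} = {(e, e)}. Then M1 and M2 are equivalent if and only if L(A1) ∩ ⋯ ∩ L(An) = ∅. -/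

import Mathlib

/-! ## Finite ordered ranked trees -/

/-- Finite ordered labeled trees. -/
inductive RTree (α : Type) : Type
  | node : α → List (RTree α) → RTree α

namespace RTree

variable {α β : Type}

/-- The label of the root node. -/
def label : RTree α → α
  | node a _ => a

mutual
  /-- The size (number of nodes) of a tree. -/
  def size : RTree α → ℕ
    | node _ ts => 1 + sizeList ts
  def sizeList : List (RTree α) → ℕ
    | [] => 0
    | t :: ts => size t + sizeList ts
end

mutual
  /-- The height of a tree (a leaf has height 1). -/
  def height : RTree α → ℕ
    | node _ ts => 1 + heightList ts
  def heightList : List (RTree α) → ℕ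
    | [] => 0
    | t :: ts => max (height t) (heightList ts)
end

mutual
  /-- Relabeling of a tree. -/
  def map (f : α → β) : RTree α → RTree β
    | node a ts => node (f a) (mapList f ts)
  def mapList (f : α → β) : List (RTree α) → List (RTree β)
    | [] => []
    | t :: ts => map f t :: mapList f ts
end

/-- `WF rk t` means `t` is a tree over the ranked alphabet with rank function `rk`:
every node labeled `a` has exactly `rk a` children.  Thus `T_Σ = {t | WF rk t}`. -/
inductive WF (rk : α → ℕ) : RTree α → Prop
  | node {a : α} {ts : List (RTree α)} :
      ts.length = rk a → (∀ t ∈ ts, WF rk t) → WF rk (node a ts)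

/-- `SubtreeAt t u r`: `u` is (the Dewey path of) a node of `t` and `r` is the
subtree of `t` rooted at `u`. -/
inductive SubtreeAt : RTree α → List ℕ → RTree α → Prop
  | here (t : RTree α) : SubtreeAt t [] t
  | child {a : α} {ts : List (RTree α)} {i : ℕ} {u : List ℕ} {ti r : RTree α} :
      ts[i]? = some ti → SubtreeAt ti u r → SubtreeAt (node a ts) (i :: u) r

/-- `ReplaceAt t u r t'`: `u` is a node of `t`, and `t'` is the tree `t[u ← r]`
obtained from `t` by replacing the subtree rooted at `u` by `r`. -/
inductive ReplaceAt : RTree α → List ℕ → RTree α → RTree α → Prop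
  | here (t r : RTree α) : ReplaceAt t [] r r
  | child {a : α} {ts : List (RTree α)} {i : ℕ} {u : List ℕ} {r ti ti' : RTree α} :
      ts[i]? = some ti → ReplaceAt ti u r ti' →
      ReplaceAt (node a ts) (i :: u) r (node a (ts.set i ti'))

end RTree

/-- A (complete) deterministic finite-state bottom-up tree automaton over the
alphabet `S`, with state set `P` and final states `final`. -/
structure BUA (S P : Type) where
  delta : S → List P → P
  final : Set P

variable {S P : Type}

mutual
  /-- The state reached by a bottom-up automaton on a tree. -/
  def buaRun (A : BUA S P) : RTree S → P
    | .node a ts => A.delta a (buaRunList A ts)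
  def buaRunList (A : BUA S P) : List (RTree S) → List P
    | [] => []
    | t :: ts => buaRun A t :: buaRunList A ts
end

/-- A tree language over the ranked alphabet `(S, rk)` is regular if it is recognized
by a deterministic finite-state bottom-up tree automaton. -/
def RegularTreeLang (rk : S → ℕ) (L : Set (RTree S)) : Prop :=
  ∃ (P : Type) (_ : Fintype P) (A : BUA S P),
    L = {t | RTree.WF rk t ∧ buaRun A t ∈ A.final}
/-! ## Deterministic macro tree transducers

A state of rank `m+1` is encoded by `prm q = m` (its number of context parameters).
Right-hand sides of rules are trees over `Δ ∪ Q ∪ X ∪ Y`, where every `Q`-labeled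
node has an input variable `x_i` as its (implicit) first child; this is encoded by
the constructor `MRhs.call q i ps`.  A top-down tree transducer is exactly a macro
tree transducer all of whose states have rank one (`prm q = 0`).

To be able to talk about partial inputs `s[u ← x]`, input trees are trees over
`Option S`, where `none` plays the role of the fresh rank-0 symbol `x`; an
ordinary input tree `s` is represented as `RTree.map some s`.  Outputs (sentential
forms) are trees over the alphabet `PL Q D`: output symbols `PL.out d`, unresolved
state calls `PL.st q` (i.e. `q(x, t₁, …, t_m)`, whose children are the current
parameter trees), and formal context parameters `PL.pr j` (i.e. `y_{j+1}`). -/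

/-- Labels of sentential forms produced by a macro tree transducer. -/
inductive PL (Q D : Type) : Type
  | out : D → PL Q D
  | st : Q → PL Q D
  | pr : ℕ → PL Q D

/-- Right-hand sides of rules of a macro tree transducer with states `Q` and output
alphabet `D`: `out d ts` is an output symbol with subtrees, `param j` is the context
parameter `y_{j+1}`, and `call q i ps` is a state call `q(x_{i+1}, ps)`. -/
inductive MRhs (Q D : Type) : Type
  | out : D → List (MRhs Q D) → MRhs Q D
  | param : ℕ → MRhs Q D
  | call : Q → ℕ → List (MRhs Q D) → MRhs Q D

/-- Well-formedness of a right-hand side for a rule of a state with `m` parameters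
and an input symbol of rank `k`: output symbols have the right number of children,
parameters are among `y_1, …, y_m`, input variables are among `x_1, …, x_k`, and a
call of state `q'` passes exactly `prm q'` parameter trees. -/
inductive RhsWF {Q D : Type} (rkD : D → ℕ) (prm : Q → ℕ) (k m : ℕ) : MRhs Q D → Prop
  | out {d ts} : ts.length = rkD d → (∀ t ∈ ts, RhsWF rkD prm k m t) →
      RhsWF rkD prm k m (.out d ts)
  | param {j} : j < m → RhsWF rkD prm k m (.param j)
  | call {q i ps} : i < k → ps.length = prm q → (∀ t ∈ ps, RhsWF rkD prm k m t) →
      RhsWF rkD prm k m (.call q i ps)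

/-- A deterministic macro tree transducer with states `Q`, input alphabet `(S, rkS)`
and output alphabet `(D, rkD)`.  `prm q` is the number of context parameters of
state `q` (so `q` has rank `prm q + 1`); `rules q σ` is the right-hand side of the
`(q,σ)`-rule, if present (determinism: at most one rule per pair). -/
structure MTT (Q S D : Type) where
  rkS : S → ℕ
  rkD : D → ℕ
  prm : Q → ℕ
  init : Q
  rules : Q → S → Option (MRhs Q D)

namespace MTT

variable {Q S D : Type}

/-- `M` is a well-formed macro tree transducer: the initial state has rank one and
all right-hand sides are well-formed. -/
def Proper (M : MTT Q S D) : Prop :=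
  M.prm M.init = 0 ∧
    ∀ q σ r, M.rules q σ = some r → RhsWF M.rkD M.prm (M.rkS σ) (M.prm q) r

/-- `M` is total: there is exactly one rule for every state and input symbol. -/
def Total (M : MTT Q S D) : Prop := ∀ q σ, (M.rules q σ).isSome

end MTT

/-- A top-down tree transducer is a macro tree transducer each of whose states has
rank one, i.e. no context parameters. -/
def IsTopDown {Q S D : Type} (M : MTT Q S D) : Prop := ∀ q, M.prm q = 0

/-- A macro tree transducer is monadic if its input and output ranked alphabets
only contain symbols of rank 1 and rank 0. -/
def MTT.Monadic {Q S D : Type} (M : MTT Q S D) : Prop :=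
  (∀ σ, M.rkS σ ≤ 1) ∧ (∀ d, M.rkD d ≤ 1)

variable {Q S D : Type}

mutual
  /-- Second-order substitution of the parameter leaves `y_{j+1}` of a sentential
  form by the trees `vs`. -/
  def psubst (vs : List (RTree (PL Q D))) : RTree (PL Q D) → RTree (PL Q D)
    | .node (.pr j) _ => vs.getD j (.node (.pr j) [])
    | .node (.out d) ts => .node (.out d) (psubstList vs ts)
    | .node (.st q) ts => .node (.st q) (psubstList vs ts)
  def psubstList (vs : List (RTree (PL Q D))) :
      List (RTree (PL Q D)) → List (RTree (PL Q D))
    | [] => []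
    | t :: ts => psubst vs t :: psubstList vs ts
end

/-- The fresh rank-0 input symbol `x` used in partial inputs `s[u ← x]`. -/
def xLeaf {S : Type} : RTree (Option S) := .node none []

mutual
  /-- Big-step semantics of a macro tree transducer: `MEval M q s t` means that the
  computation of `M` started in state `q` on the input tree `s` (a tree over
  `Option S`, where `none` is the fresh symbol `x` of partial inputs) produces the
  (sentential form) tree `t`.  On the symbol `x` the computation blocks, yielding
  the unresolved call `q(x, y_1, …, y_m)`.  For `s ∈ T_Σ` (no occurrence of `x`)
  and well-formed transducers, `t` contains no `PL.st` labels, and `M_q(s)` is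
  defined iff such a `t` exists; determinism makes `t` unique. -/
  inductive MEval (M : MTT Q S D) : Q → RTree (Option S) → RTree (PL Q D) → Prop
    | atX (q : Q) :
        MEval M q (.node none [])
          (.node (.st q) ((List.range (M.prm q)).map fun j => .node (.pr j) []))
    | step {q : Q} {σ : S} {ss : List (RTree (Option S))} {r : MRhs Q D}
        {t : RTree (PL Q D)} :
        M.rules q σ = some r → MExpand M ss r t → MEval M q (.node (some σ) ss) t

  /-- Evaluation of a right-hand side with current input subtrees `ss`. -/
  inductive MExpand (M : MTT Q S D) :
      List (RTree (Option S)) → MRhs Q D → RTree (PL Q D) → Prop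
    | out {ss d ts us} : MExpandList M ss ts us →
        MExpand M ss (.out d ts) (.node (.out d) us)
    | param {ss j} : MExpand M ss (.param j) (.node (.pr j) [])
    | call {ss : List (RTree (Option S))} {q : Q} {i : ℕ} {ps : List (MRhs Q D)}
        {si : RTree (Option S)} {vs : List (RTree (PL Q D))} {u : RTree (PL Q D)} :
        ss[i]? = some si → MExpandList M ss ps vs → MEval M q si u →
        MExpand M ss (.call q i ps) (psubst vs u)

  inductive MExpandList (M : MTT Q S D) :
      List (RTree (Option S)) → List (MRhs Q D) → List (RTree (PL Q D)) → Prop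
    | nil {ss} : MExpandList M ss [] []
    | cons {ss t ts u us} : MExpand M ss t u → MExpandList M ss ts us →
        MExpandList M ss (t :: ts) (u :: us)
end

/-- The translation `τ_M ⊆ T_Σ × T_Δ` realized by a macro tree transducer `M`
(the graph of the partial function `τ_M : T_Σ ⇀ T_Δ`). -/
def MTT.tau (M : MTT Q S D) : Set (RTree S × RTree D) :=
  {p | RTree.WF M.rkS p.1 ∧ MEval M M.init (RTree.map some p.1) (RTree.map PL.out p.2)}

/-! ## Statement 19: equivalence of top-down tree transducers is Exptime-hard —
the reduction from intersection emptiness of deterministic top-down tree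
automata. -/

/-- A deterministic top-down tree automaton over `S` with state set `St`:
`trans p τ = some [p1,…,pk]` encodes the transition `p(τ) → (p1,…,pk)`. -/
structure TDA (S St : Type) where
  init : St
  trans : St → S → Option (List St)

variable {S St : Type}

mutual
  /-- `TDAccept A p s`: the run of `A` started in state `p` at the root of `s` is
  defined at every node of `s`. -/
  inductive TDAccept (A : TDA S St) : St → RTree S → Prop
    | node {p : St} {σ : S} {ss : List (RTree S)} {ps : List St} :
        A.trans p σ = some ps → TDAcceptList A ps ss → TDAccept A p (.node σ ss)
  inductive TDAcceptList (A : TDA S St) : List St → List (RTree S) → Prop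
    | nil : TDAcceptList A [] []
    | cons {p ps s ss} : TDAccept A p s → TDAcceptList A ps ss →
        TDAcceptList A (p :: ps) (s :: ss)
end

/-- The tree language accepted by a deterministic top-down tree automaton. -/
def tdaLang (rkS : S → ℕ) (A : TDA S St) : Set (RTree S) :=
  {s | RTree.WF rkS s ∧ TDAccept A A.init s}

section Construction

variable [DecidableEq S] (rkS : S → ℕ) (n : ℕ) {St : Fin n → Type}
  (A : ∀ i, TDA S (St i)) (σsym esym : S)

/-- The top-down tree transducer `M1` built from the automata `A 0, …, A (n-1)`:
its states are a fresh initial state `q0 = none` together with the (disjointly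
united) states of the `A i`; its output alphabet is `Σ ∪ {δ}` (encoded as
`Option S`, with `none = δ` of rank `n`).  In state `some ⟨i, p⟩` it works as the
partial identity determined by `A i`; the initial state has the two rules
`q0(σ(x1,…,xm)) → δ(q1(x1), …, qn(x1))` (where `qi` is the initial state of
`A i`) and `q0(e) → e`. -/
def hardM1 : MTT (Option ((i : Fin n) × St i)) S (Option S) where
  rkS := rkS
  rkD := fun d => match d with
    | none => n
    | some σ => rkS σ
  prm := fun _ => 0
  init := none
  rules := fun q τ =>
    match q with
    | none =>
        if τ = σsym then
          some (.out none ((List.finRange n).map fun i =>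
            MRhs.call (some ⟨i, (A i).init⟩) 0 []))
        else if τ = esym then some (.out (some esym) []) else none
    | some ⟨i, p⟩ =>
        ((A i).trans p τ).map fun ps =>
          MRhs.out (some τ)
            (((List.range ps.length).zip ps).map fun pr =>
              MRhs.call (some ⟨i, pr.2⟩) pr.1 [])

/-- The single-state top-down tree transducer `M2` with the sole rule
`p(e) → e`, realizing the translation `{(e, e)}`. -/
def hardM2 : MTT Unit S (Option S) where
  rkS := rkS
  rkD := fun d => match d with
    | none => n
    | some σ => rkS σ
  prm := fun _ => 0
  init := ()
  rules := fun _ τ =>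
    if τ = esym then some (.out (some esym) []) else none

end Construction

section AuxLemmas

theorem RTree.ind' {α : Type} {P : RTree α → Prop}
    (h : ∀ a ts, (∀ t ∈ ts, P t) → P (RTree.node a ts)) : ∀ t, P t := fun t =>
  RTree.rec (motive_1 := P) (motive_2 := fun ts => ∀ t ∈ ts, P t)
    (fun a ts ih => h a ts ih)
    (fun t ht => absurd ht List.not_mem_nil)
    (fun hd tl ihd ihtl t ht => by
      rcases List.mem_cons.1 ht with rfl | h
      · exact ihd
      · exact ihtl t h)
    t

theorem RTree.mapList_eq {α β : Type} (f : α → β) :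
    ∀ ts : List (RTree α), RTree.mapList f ts = ts.map (RTree.map f)
  | [] => rfl
  | t :: ts => by rw [RTree.mapList, List.map_cons, RTree.mapList_eq f ts]

theorem RTree.map_node {α β : Type} (f : α → β) (a : α) (ts : List (RTree α)) :
    RTree.map f (RTree.node a ts) = RTree.node (f a) (ts.map (RTree.map f)) := by
  rw [RTree.map, RTree.mapList_eq]

variable {Q S D : Type}

theorem psubstList_eq (vs : List (RTree (PL Q D))) :
    ∀ ts : List (RTree (PL Q D)), psubstList vs ts = ts.map (psubst vs)
  | [] => rfl
  | t :: ts => by rw [psubstList, List.map_cons, psubstList_eq vs ts]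

theorem psubst_map_out {β : Type} (vs : List (RTree (PL Q D))) (h : β → D) :
    ∀ s : RTree β, psubst vs (RTree.map (fun b => PL.out (h b)) s)
      = RTree.map (fun b => PL.out (h b)) s := by
  intro s
  induction s using RTree.ind' with
  | _ a ts IH =>
    rw [RTree.map_node, psubst, psubstList_eq, List.map_map]
    congr 1
    exact List.map_congr_left fun t ht => IH t ht

theorem mExpandList_iff_forall₂ {M : MTT Q S D} {ss : List (RTree (Option S))}
    {rs : List (MRhs Q D)} {us : List (RTree (PL Q D))} :
    MExpandList M ss rs us ↔ List.Forall₂ (MExpand M ss) rs us := by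
  constructor
  · intro h
    induction rs generalizing us with
    | nil => cases h; exact List.Forall₂.nil
    | cons r rs IH => cases h with | cons h1 h2 => exact List.Forall₂.cons h1 (IH h2)
  · intro h
    induction h with
    | nil => exact MExpandList.nil
    | cons h1 _ IH => exact MExpandList.cons h1 IH

theorem tdAcceptList_iff_forall₂ {St : Type} {A : TDA S St} {ps : List St}
    {ss : List (RTree S)} :
    TDAcceptList A ps ss ↔ List.Forall₂ (TDAccept A) ps ss := by
  constructor
  · intro h
    induction ps generalizing ss with
    | nil => cases h; exact List.Forall₂.nil
    | cons p ps IH => cases h with | cons h1 h2 => exact List.Forall₂.cons h1 (IH h2)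
  · intro h
    induction h with
    | nil => exact TDAcceptList.nil
    | cons h1 _ IH => exact TDAcceptList.cons h1 IH

theorem mExpand_call_inv {M : MTT Q S D} {ss : List (RTree (Option S))}
    {q : Q} {i : ℕ} {ps : List (MRhs Q D)} {w : RTree (PL Q D)}
    (h : MExpand M ss (.call q i ps) w) :
    ∃ si vs u, ss[i]? = some si ∧ MExpandList M ss ps vs ∧ MEval M q si u ∧
      w = psubst vs u := by
  cases h with
  | call h1 h2 h3 => exact ⟨_, _, _, h1, h2, h3, rfl⟩

end AuxLemmas
section AuxMain

variable [DecidableEq S] {rkS : S → ℕ} {n : ℕ} {St : Fin n → Type}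
  {A : ∀ i, TDA S (St i)} {σsym esym : S}

theorem lemA (hA : ∀ i p τ ps, (A i).trans p τ = some ps → ps.length = rkS τ)
    (s : RTree S) :
    RTree.WF rkS s → ∀ (i : Fin n) (p : St i) (t : RTree (PL (Option ((i : Fin n) × St i)) (Option S))),
      MEval (hardM1 rkS n A σsym esym) (some ⟨i, p⟩) (RTree.map some s) t →
      TDAccept (A i) p s := by
  induction s using RTree.ind' with
  | _ a ts IH =>
    intro hwf i p t hev
    rw [RTree.map_node] at hev
    cases hev with
    | step hrule hexp =>
      rename_i r
      have hrule' : ((A i).trans p a).map (fun ps =>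
          MRhs.out (some a) (((List.range ps.length).zip ps).map fun pr =>
            MRhs.call (some ⟨i, pr.2⟩) pr.1 [])) = some r := hrule
      rw [Option.map_eq_some_iff] at hrule'
      obtain ⟨ps, hps, rfl⟩ := hrule'
      cases hexp with
      | out hlist =>
        rw [mExpandList_iff_forall₂, List.forall₂_iff_get] at hlist
        obtain ⟨hlen, hget⟩ := hlist
        cases hwf with
        | node hlen' hwfts =>
          have hlenps : ps.length = ts.length := by
            rw [hA i p a ps hps, hlen']
          refine TDAccept.node hps ?_
          rw [tdAcceptList_iff_forall₂, List.forall₂_iff_get]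
          refine ⟨hlenps, fun j h₁ h₂ => ?_⟩
          rename_i us
          have h₃ : j < us.length := by
            have := hlen; simp at this; omega
          have hg := hget j (by simpa using h₁) h₃
          simp only [List.get_eq_getElem, List.getElem_map, List.getElem_zip, List.getElem_range] at hg
          obtain ⟨si, vs, u, hsi, -, hev', -⟩ := mExpand_call_inv hg
          rw [List.getElem?_map, List.getElem?_eq_getElem h₂, Option.map_some] at hsi
          cases hsi
          exact IH _ (List.getElem_mem h₂) (hwfts _ (List.getElem_mem h₂)) i ps[j] _ hev'

theorem lemB (s : RTree S) : ∀ (i : Fin n) (p : St i),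
    TDAccept (A i) p s →
    MEval (hardM1 rkS n A σsym esym) (some ⟨i, p⟩) (RTree.map some s)
      (RTree.map (fun a => PL.out (some a)) s) := by
  induction s using RTree.ind' with
  | _ a ts IH =>
    intro i p hacc
    cases hacc with
    | node hps hlist =>
      rename_i ps
      rw [tdAcceptList_iff_forall₂, List.forall₂_iff_get] at hlist
      obtain ⟨hlen, hget⟩ := hlist
      rw [RTree.map_node, RTree.map_node]
      refine MEval.step (σ := a) (r := MRhs.out (some a)
        (((List.range ps.length).zip ps).map fun pr => MRhs.call (some ⟨i, pr.2⟩) pr.1 [])) ?_ ?_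
      · show ((A i).trans p a).map _ = _
        rw [hps, Option.map_some]
      · refine MExpand.out ?_
        rw [mExpandList_iff_forall₂, List.forall₂_iff_get]
        refine ⟨by simpa using hlen, fun j h₁ h₂ => ?_⟩
        have h₁' : j < ps.length := by simpa using h₁
        have h₂' : j < ts.length := by simpa using h₂
        simp only [List.get_eq_getElem, List.getElem_map, List.getElem_zip, List.getElem_range]
        have : RTree.map (fun a => PL.out (Q := Option ((i : Fin n) × St i)) (some a)) ts[j]
            = psubst [] (RTree.map (fun a => PL.out (some a)) ts[j]) := by
          rw [psubst_map_out]
        rw [this]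
        refine MExpand.call (si := RTree.map some ts[j]) ?_ MExpandList.nil ?_
        · rw [List.getElem?_map, List.getElem?_eq_getElem h₂', Option.map_some]
        · exact IH _ (List.getElem_mem h₂') i ps[j]
            (hget j (by simpa using h₁') (by simpa using h₂'))

end AuxMain
section AuxFinal

variable {Q S D : Type}

theorem RTree.map_map {α β γ : Type} (f : β → γ) (g : α → β) (t : RTree α) :
    RTree.map f (RTree.map g t) = RTree.map (fun a => f (g a)) t := by
  induction t using RTree.ind' with
  | _ a ts IH =>
    rw [RTree.map_node, RTree.map_node, RTree.map_node, List.map_map]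
    exact congrArg _ (List.map_congr_left fun t ht => IH t ht)

theorem mEval_some_inv {M : MTT Q S D} {q : Q} {a : S} {ss : List (RTree (Option S))}
    {w : RTree (PL Q D)} (h : MEval M q (.node (some a) ss) w) :
    ∃ r, M.rules q a = some r ∧ MExpand M ss r w := by
  cases h with
  | step h1 h2 => exact ⟨_, h1, h2⟩

theorem mExpand_out_inv {M : MTT Q S D} {ss : List (RTree (Option S))} {d : D}
    {ts : List (MRhs Q D)} {w : RTree (PL Q D)} (h : MExpand M ss (.out d ts) w) :
    ∃ us, MExpandList M ss ts us ∧ w = .node (.out d) us := by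
  cases h with
  | out h1 => exact ⟨_, h1, rfl⟩

theorem mExpandList_nil_inv {M : MTT Q S D} {ss : List (RTree (Option S))}
    {us : List (RTree (PL Q D))} (h : MExpandList M ss [] us) : us = [] := by
  cases h; rfl

theorem tauM2_mem [DecidableEq S] {rkS : S → ℕ} {n : ℕ} {esym : S} (he : rkS esym = 0)
    {s : RTree S} {t : RTree (Option S)} :
    (s, t) ∈ MTT.tau (hardM2 rkS n esym) ↔
      s = RTree.node esym [] ∧ t = RTree.node (some esym) [] := by
  constructor
  · rintro ⟨hwf, hev⟩
    obtain ⟨a, ss⟩ := s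
    rw [RTree.map_node] at hev
    obtain ⟨r, hrule, hexp⟩ := mEval_some_inv hev
    have hrule' : (if a = esym then
        some (MRhs.out (Q := Unit) (some esym) []) else none) = some r := hrule
    split_ifs at hrule' with ha
    subst ha
    cases hrule'
    obtain ⟨us, hlist, hw⟩ := mExpand_out_inv hexp
    cases mExpandList_nil_inv hlist
    cases hwf with
    | node hlen _ =>
      have hss : ss = [] := List.eq_nil_of_length_eq_zero (by simpa [hardM2, he] using hlen)
      subst hss
      obtain ⟨b, bs⟩ := t
      rw [RTree.map_node] at hw
      obtain ⟨hb, hbs⟩ := RTree.node.inj hw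
      cases PL.out.inj hb
      rw [List.map_eq_nil_iff] at hbs
      subst hbs
      exact ⟨rfl, rfl⟩
  · rintro ⟨rfl, rfl⟩
    refine ⟨RTree.WF.node (by simp [hardM2, he]) (by simp), ?_⟩
    rw [RTree.map_node, RTree.map_node]
    simp only [List.map_nil]
    refine MEval.step (r := MRhs.out (some esym) []) ?_ (MExpand.out MExpandList.nil)
    show (if esym = esym then _ else none) = _
    rw [if_pos rfl]

end AuxFinal
section MainLemmas

variable {S : Type} [DecidableEq S] {rkS : S → ℕ} {n : ℕ} {St : Fin n → Type}
  {A : ∀ i, TDA S (St i)} {σsym esym : S}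

theorem lemD (hσ : 1 ≤ rkS σsym) (he : rkS esym = 0)
    {s : RTree S} (hwf : RTree.WF rkS s)
    (hacc : ∀ i, TDAccept (A i) (A i).init s) :
    (RTree.node σsym (s :: List.replicate (rkS σsym - 1) (RTree.node esym [])),
     RTree.node none (List.replicate n (RTree.map some s)))
      ∈ MTT.tau (hardM1 rkS n A σsym esym) := by
  constructor
  · refine RTree.WF.node ?_ ?_
    · show _ = (hardM1 rkS n A σsym esym).rkS σsym
      simp only [hardM1, List.length_cons, List.length_replicate]
      omega
    · intro t ht
      rcases List.mem_cons.1 ht with rfl | h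
      · exact hwf
      · rw [List.eq_of_mem_replicate h]
        exact RTree.WF.node (by simp [hardM1, he]) (by simp)
  · show MEval _ none _ _
    rw [RTree.map_node, RTree.map_node, List.map_replicate, RTree.map_map]
    refine MEval.step (r := .out none ((List.finRange n).map fun i =>
        MRhs.call (some ⟨i, (A i).init⟩) 0 [])) ?_ ?_
    · show (if σsym = σsym then _ else _) = _
      rw [if_pos rfl]
    · refine MExpand.out ?_
      rw [mExpandList_iff_forall₂, List.forall₂_iff_get]
      refine ⟨by simp, fun j h₁ h₂ => ?_⟩
      have hj : j < n := by simpa using h₁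
      simp only [List.get_eq_getElem, List.getElem_map, List.getElem_finRange,
        List.getElem_replicate]
      have hps : RTree.map (fun a => PL.out
            (Q := Option ((i : Fin n) × St i)) (some a)) s
          = psubst [] (RTree.map (fun a => PL.out (some a)) s) :=
        (psubst_map_out _ _ _).symm
      rw [hps]
      refine MExpand.call (si := RTree.map some s) ?_ MExpandList.nil (lemB s _ _ (hacc _))
      simp
end MainLemmas
/-- `M1` and `M2` are equivalent if and only if `L(A 0) ∩ ⋯ ∩ L(A (n-1)) = ∅`. -/
theorem tdtt_equivalence_vs_tda_intersection_emptiness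
    [DecidableEq S] [Fintype S] (rkS : S → ℕ) (n : ℕ) {St : Fin n → Type}
    [∀ i, Fintype (St i)] (A : ∀ i, TDA S (St i))
    (hA : ∀ i p τ ps, (A i).trans p τ = some ps → ps.length = rkS τ)
    (σsym esym : S) (hσ : 1 ≤ rkS σsym) (he : rkS esym = 0) :
    MTT.tau (hardM1 rkS n A σsym esym) = MTT.tau (hardM2 rkS n esym) ↔
      (⋂ i, tdaLang rkS (A i)) = ∅ := by
  have hne : σsym ≠ esym := by
    intro h; rw [h, he] at hσ; omega
  constructor
  · intro htau
    rw [Set.eq_empty_iff_forall_notMem]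
    intro s hs
    simp only [Set.mem_iInter, tdaLang, Set.mem_setOf_eq] at hs
    obtain ⟨s', hwf', hacc'⟩ :
        ∃ s', RTree.WF rkS s' ∧ ∀ i, TDAccept (A i) (A i).init s' := by
      rcases Nat.eq_zero_or_pos n with hn | hn
      · exact ⟨RTree.node esym [], RTree.WF.node (by simp [he]) (by simp),
          fun i => absurd i.isLt (by omega)⟩
      · exact ⟨s, (hs ⟨0, hn⟩).1, fun i => (hs i).2⟩
    have hmem := lemD (A := A) hσ he hwf' hacc'
    rw [htau, tauM2_mem he] at hmem
    exact hne (RTree.node.inj hmem.1).1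
  · intro hempty
    ext ⟨s, t⟩
    rw [tauM2_mem he]
    constructor
    · rintro ⟨hwf, hev⟩
      obtain ⟨a, ss⟩ := s
      rw [RTree.map_node] at hev
      obtain ⟨r, hrule, hexp⟩ := mEval_some_inv hev
      have hrule' : (if a = σsym then
          some (MRhs.out none ((List.finRange n).map fun i =>
            MRhs.call (some ⟨i, (A i).init⟩) 0 []))
        else if a = esym then some (MRhs.out (some esym) []) else none) = some r := hrule
      split_ifs at hrule' with h1 h2
      · exfalso
        subst h1
        cases hrule'
        obtain ⟨us, hlist, hw⟩ := mExpand_out_inv hexp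
        cases hwf with
        | node hlen hwfts =>
          have hlen0 : 0 < ss.length := by
            have h : ss.length = rkS a := hlen
            omega
          have hs1 : ss[0] ∈ ⋂ i, tdaLang rkS (A i) := by
            rw [Set.mem_iInter]
            intro i
            rw [mExpandList_iff_forall₂, List.forall₂_iff_get] at hlist
            obtain ⟨hL, hget⟩ := hlist
            have hus : (i : ℕ) < us.length := by
              have := hL; simp only [List.length_map, List.length_finRange] at this
              omega
            have hg := hget i.val (by simp [i.isLt]) hus
            have hfr : (List.finRange n)[(i : ℕ)]'(by simp [i.isLt]) = i := by
              simp
            simp only [List.get_eq_getElem, List.getElem_map] at hg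
            rw [hfr] at hg
            obtain ⟨si, vs, u, hsi, -, hev', -⟩ := mExpand_call_inv hg
            rw [List.getElem?_map, List.getElem?_eq_getElem hlen0, Option.map_some] at hsi
            cases hsi
            have hwf0 : RTree.WF rkS ss[0] := hwfts _ (List.getElem_mem hlen0)
            exact ⟨hwf0, lemA hA ss[0] hwf0 i (A i).init _ hev'⟩
          rw [hempty] at hs1
          exact absurd hs1 (Set.notMem_empty _)
      · subst h2
        cases hrule'
        obtain ⟨us, hlist, hw⟩ := mExpand_out_inv hexp
        cases mExpandList_nil_inv hlist
        cases hwf with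
        | node hlen _ =>
          have hss : ss = [] := List.eq_nil_of_length_eq_zero
            (by simpa [hardM1, he] using hlen)
          subst hss
          obtain ⟨b, bs⟩ := t
          rw [RTree.map_node] at hw
          obtain ⟨hb, hbs⟩ := RTree.node.inj hw
          cases PL.out.inj hb
          rw [List.map_eq_nil_iff] at hbs
          subst hbs
          exact ⟨rfl, rfl⟩
    · rintro ⟨rfl, rfl⟩
      refine ⟨RTree.WF.node (by simp [hardM1, he]) (by simp), ?_⟩
      rw [RTree.map_node, RTree.map_node]
      simp only [List.map_nil]
      refine MEval.step (r := MRhs.out (some esym) []) ?_ (MExpand.out MExpandList.nil)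
      show (if esym = σsym then _ else if esym = esym then _ else none) = _
      rw [if_neg (Ne.symm hne), if_pos rfl]
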